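/- If k has characteristic p (a prime), then the k-algebra homomorphism from k[y_0, y_1, y_2, ...]/(y_0^p, y_1^p, ...) to the divided power algebra D sending y_i to x^[p^i] is an isomorphism of k-algebras. -/

import Mathlib

open Nat

section lucas
variable {p : ℕ} [hpf : Fact p.Prime]

lemma lucasA : ∀ (i c : ℕ), (c * p ^ i).choose (p ^ i) ≡ c [MOD p]
  | 0, c => by simpa using Nat.ModEq.refl c
  | (i+1), c => by
    have h := (Choose.choose_modEq_choose_mod_mul_choose_div_nat
      (n := c * p ^ (i+1)) (k := p ^ (i+1)) (p := p))
    have h1 : c * p ^ (i+1) % p = 0 := by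
      simp [pow_succ, ← mul_assoc, Nat.mul_mod_left]
    have h2 : p ^ (i+1) % p = 0 := by
      simp [pow_succ, Nat.mul_mod_left]
    have h3 : c * p ^ (i+1) / p = c * p ^ i := by
      rw [pow_succ, ← mul_assoc, Nat.mul_div_cancel _ hpf.out.pos]
    have h4 : p ^ (i+1) / p = p ^ i := by
      rw [pow_succ, Nat.mul_div_cancel _ hpf.out.pos]
    rw [h1, h2, h3, h4] at h
    rw [Nat.choose_self, one_mul] at h
    exact h.trans (lucasA i c)

lemma lucasB : ∀ (j c T : ℕ), T < p ^ j → (c * p ^ j + T).choose (c * p ^ j) ≡ 1 [MOD p]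
  | 0, c, T, hT => by
    have : T = 0 := Nat.lt_one_iff.mp (by simpa using hT)
    subst this
    simp [Nat.ModEq.refl]
  | (j+1), c, T, hT => by
    have hp0 := hpf.out.pos
    have h := (Choose.choose_modEq_choose_mod_mul_choose_div_nat
      (n := c * p ^ (j+1) + T) (k := c * p ^ (j+1)) (p := p))
    have h1 : (c * p ^ (j+1) + T) % p = T % p := by
      rw [pow_succ, ← mul_assoc, mul_comm (c * p ^ j) p, Nat.mul_add_mod]
    have h2 : c * p ^ (j+1) % p = 0 := by
      simp [pow_succ, ← mul_assoc, Nat.mul_mod_left]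
    have h3 : (c * p ^ (j+1) + T) / p = c * p ^ j + T / p := by
      rw [pow_succ, ← mul_assoc, mul_comm (c * p ^ j) p, Nat.mul_add_div hp0]
    have h4 : c * p ^ (j+1) / p = c * p ^ j := by
      rw [pow_succ, ← mul_assoc, Nat.mul_div_cancel _ hp0]
    rw [h1, h2, h3, h4] at h
    have hT' : T / p < p ^ j := by
      rw [Nat.div_lt_iff_lt_mul hp0]
      simpa [pow_succ] using hT
    rw [Nat.choose_zero_right, one_mul] at h
    exact h.trans (lucasB j c (T / p) hT')

end lucas

section digits
variable (p : ℕ)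

noncomputable def valP (e : ℕ →₀ ℕ) : ℕ := e.sum fun i d => d * p ^ i

lemma valP_add (e f : ℕ →₀ ℕ) : valP p (e + f) = valP p e + valP p f :=
  Finsupp.sum_add_index' (fun i => by simp) (fun i a b => add_mul a b _)

lemma valP_single (i d : ℕ) : valP p (Finsupp.single i d) = d * p ^ i :=
  Finsupp.sum_single_index (by simp)

lemma valP_eq_zero (hp : 0 < p) {e : ℕ →₀ ℕ} (h : valP p e = 0) : e = 0 := by
  ext i
  by_cases hi : i ∈ e.support
  · have := (Finset.sum_eq_zero_iff.mp h) i hi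
    have hpi : 0 < p ^ i := Nat.pow_pos hp
    simpa using Nat.mul_eq_zero.mp this |>.resolve_right (by omega)
  · simpa using Finsupp.notMem_support_iff.mp hi

lemma succ_bijOn (e : ℕ →₀ ℕ) :
    Set.BijOn Nat.succ (Nat.succ ⁻¹' ↑(e.erase 0).support) ↑(e.erase 0).support := by
  refine ⟨fun x hx => hx, fun x hx y hy h => Nat.succ_injective h, fun b hb => ?_⟩
  have hb0 : b ≠ 0 := by
    intro h; subst h; simpa using hb
  obtain ⟨b', rfl⟩ := Nat.exists_eq_succ_of_ne_zero hb0
  exact ⟨b', by simpa using hb, rfl⟩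

noncomputable def shiftP (e : ℕ →₀ ℕ) : ℕ →₀ ℕ :=
  Finsupp.comapDomain Nat.succ (e.erase 0) (succ_bijOn e).injOn

lemma shiftP_apply (e : ℕ →₀ ℕ) (i : ℕ) : shiftP e i = e (i + 1) := by
  simp [shiftP, Finsupp.comapDomain_apply, Finsupp.erase_ne (Nat.succ_ne_zero i)]

lemma valP_erase (e : ℕ →₀ ℕ) : valP p (e.erase 0) = p * valP p (shiftP e) := by
  have := Finsupp.sum_comapDomain (M := ℕ) (N := ℕ) Nat.succ (e.erase 0)
    (fun i d => d * p ^ i) (succ_bijOn e)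
  rw [valP, ← this]
  unfold valP shiftP
  rw [Finsupp.sum, Finsupp.sum, Finset.mul_sum]
  refine Finset.sum_congr rfl fun i _ => ?_
  simp [Function.comp, pow_succ]
  ring

lemma valP_decomp (e : ℕ →₀ ℕ) : valP p e = e 0 + p * valP p (shiftP e) := by
  conv_lhs => rw [← Finsupp.single_add_erase 0 e]
  rw [valP_add, valP_single, valP_erase]
  simp

lemma valP_inj (hp : 2 ≤ p) : ∀ n (e f : ℕ →₀ ℕ), (∀ i, e i < p) → (∀ i, f i < p) →
    valP p e = n → valP p f = n → e = f := by
  intro n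
  induction n using Nat.strong_induction_on with
  | _ n IH =>
    intro e f he hf hve hvf
    have hde := valP_decomp p e
    have hdf := valP_decomp p f
    have he0 : e 0 = n % p := by
      rw [← hve, hde, Nat.add_mul_mod_self_left, Nat.mod_eq_of_lt (he 0)]
    have hf0 : f 0 = n % p := by
      rw [← hvf, hdf, Nat.add_mul_mod_self_left, Nat.mod_eq_of_lt (hf 0)]
    have hm : valP p (shiftP e) = valP p (shiftP f) := by
      have : e 0 + p * valP p (shiftP e) = f 0 + p * valP p (shiftP f) := by
        rw [← hde, ← hdf, hve, hvf]
      rw [he0, hf0] at this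
      have h2 : p * valP p (shiftP e) = p * valP p (shiftP f) := by omega
      exact Nat.eq_of_mul_eq_mul_left (by omega) h2
    have hshift : shiftP e = shiftP f := by
      by_cases hm0 : valP p (shiftP e) = 0
      · have h1 : shiftP e = 0 := valP_eq_zero p (by omega) hm0
        have h2 : shiftP f = 0 := valP_eq_zero p (by omega) (hm ▸ hm0)
        rw [h1, h2]
      · refine IH (valP p (shiftP e)) ?_ _ _
          (fun i => by rw [shiftP_apply]; exact he _)
          (fun i => by rw [shiftP_apply]; exact hf _) rfl hm.symm
        have hle : 2 * valP p (shiftP e) ≤ p * valP p (shiftP e) :=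
          Nat.mul_le_mul_right _ hp
        omega
    ext i
    cases i with
    | zero => omega
    | succ j =>
      have := congrArg (fun g => g j) hshift
      simpa [shiftP_apply] using this

lemma valP_surj (hp : 2 ≤ p) : ∀ n, ∃ e : ℕ →₀ ℕ, (∀ i, e i < p) ∧ valP p e = n := by
  intro n
  induction n using Nat.strong_induction_on with
  | _ n IH =>
    rcases Nat.eq_zero_or_pos n with rfl | hn
    · exact ⟨0, fun i => by simp; omega, by simp [valP]⟩
    obtain ⟨e', he', hve'⟩ := IH (n / p) (Nat.div_lt_self hn (by omega))
    refine ⟨Finsupp.single 0 (n % p) + e'.mapDomain Nat.succ, ?_, ?_⟩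
    · intro i
      cases i with
      | zero =>
        have : (e'.mapDomain Nat.succ) 0 = 0 :=
          Finsupp.mapDomain_notin_range _ _ (by simp [Set.range, Nat.succ_ne_zero])
        simp [this]
        exact Nat.mod_lt _ (by omega)
      | succ j =>
        have : (e'.mapDomain Nat.succ) (j + 1) = e' j :=
          Finsupp.mapDomain_apply Nat.succ_injective _ _
        simp [Finsupp.single_apply, this]
        exact he' j
    · rw [valP_add, valP_single]
      have : valP p (e'.mapDomain Nat.succ) = p * valP p e' := by
        unfold valP
        rw [Finsupp.sum_mapDomain_index (by simp) (fun a b c => add_mul b c _)]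
        rw [Finsupp.sum, Finsupp.sum, Finset.mul_sum]
        exact Finset.sum_congr rfl fun i _ => by rw [pow_succ]; ring
      rw [this, hve']
      simpa using Nat.mod_add_div n p

end digits

lemma valP_def (p : ℕ) (e : ℕ →₀ ℕ) : valP p e = ∑ i ∈ e.support, e i * p ^ i := rfl

lemma sum_lt_pow {p : ℕ} (hp : 2 ≤ p) : ∀ (a : ℕ) (s : Finset ℕ) (e : ℕ → ℕ),
    (∀ i, e i < p) → (∀ b ∈ s, b < a) → ∑ i ∈ s, e i * p ^ i < p ^ a
  | 0, s, e, he, hs => by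
    have hse : s = ∅ := Finset.eq_empty_of_forall_notMem fun x hx => Nat.not_lt_zero x (hs x hx)
    simp [hse]
  | (a+1), s, e, he, hs => by
    have ih := sum_lt_pow hp a (s.erase a) e he (fun b hb => by
      have h1 := Finset.ne_of_mem_erase hb
      have h2 := hs b (Finset.mem_of_mem_erase hb)
      omega)
    have hea : e a * p ^ a ≤ (p - 1) * p ^ a := Nat.mul_le_mul_right _ (by have := he a; omega)
    have hsum : ∑ i ∈ s, e i * p ^ i ≤ e a * p ^ a + ∑ i ∈ s.erase a, e i * p ^ i := by
      by_cases ha : a ∈ s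
      · exact (Finset.add_sum_erase s (fun i => e i * p ^ i) ha).ge
      · rw [Finset.erase_eq_of_notMem ha]
        omega
    have hpp : (p - 1) * p ^ a + p ^ a = p ^ (a + 1) := by
      have h1 : (p - 1) * p ^ a + p ^ a = ((p - 1) + 1) * p ^ a := by ring
      rw [h1, Nat.sub_add_cancel (by omega), pow_succ, mul_comm]
    omega

lemma prod_smul_aux {k D : Type*} [CommSemiring k] [CommSemiring D] [Algebra k D]
    (s : Finset ℕ) (c : ℕ → k) (x : ℕ → D) :
    ∏ i ∈ s, c i • x i = (∏ i ∈ s, c i) • ∏ i ∈ s, x i := by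
  classical
  induction s using Finset.induction_on with
  | empty => simp
  | insert j s hj ih =>
    rw [Finset.prod_insert hj, Finset.prod_insert hj, Finset.prod_insert hj, ih,
      smul_mul_smul_comm]

/-- If `k` has characteristic `p`, the `k`-algebra homomorphism
`k[y_0, y_1, ...]/(y_0^p, y_1^p, ...) → D` sending `y_i` to `x^[p^i]` is an isomorphism,
where `D` is the divided power algebra over `k` in one variable. -/
theorem stmt1 (p : ℕ) (hp : p.Prime) (k D : Type*) [CommRing k] [CommRing D]
    [Algebra k D] [CharP k p]
    (B : Module.Basis ℕ k D) (hone : B 0 = 1)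
    (hmul : ∀ n m : ℕ, B n * B m = ((n + m).choose n : k) • B (n + m))
    (J : Ideal (MvPolynomial ℕ k))
    (hJ : J = Ideal.span (Set.range fun i : ℕ => (MvPolynomial.X i) ^ p))
    (ψ : (MvPolynomial ℕ k ⧸ J) →ₐ[k] D)
    (hψ : ∀ i : ℕ, ψ (Ideal.Quotient.mk J (MvPolynomial.X i)) = B (p ^ i)) :
    Function.Bijective ψ := by
  classical
  haveI : Fact p.Prime := ⟨hp⟩
  have hp2 := hp.two_le
  set mka : MvPolynomial ℕ k →ₐ[k] (MvPolynomial ℕ k ⧸ J) := Ideal.Quotient.mkₐ k J with hmka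
  have hX : ∀ i, ψ (mka (MvPolynomial.X i)) = B (p ^ i) := fun i => by
    rw [hmka, Ideal.Quotient.mkₐ_eq_mk]; exact hψ i
  -- powers of B (p ^ i)
  have hpow : ∀ (i e : ℕ), B (p ^ i) ^ e = ((e.factorial : k)) • B (e * p ^ i) := by
    intro i e
    induction e with
    | zero => simp [hone]
    | succ e ih =>
      rw [pow_succ, ih, smul_mul_assoc, hmul, smul_smul]
      have hch : (((e * p ^ i + p ^ i).choose (e * p ^ i) : ℕ) : k) = ((e + 1 : ℕ) : k) := by
        have h1 : (e * p ^ i + p ^ i).choose (e * p ^ i) = ((e + 1) * p ^ i).choose (p ^ i) := by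
          rw [Nat.choose_symm_add]
          congr 1
          ring
        rw [h1]
        exact CharP.natCast_eq_natCast' k p (lucasA i (e + 1))
      rw [hch]
      have harg : e * p ^ i + p ^ i = (e + 1) * p ^ i := by ring
      rw [harg]
      congr 1
      rw [Nat.factorial_succ]
      push_cast
      ring
  -- products of B-basis elements with disjoint digits
  have hprodS : ∀ (e : ℕ →₀ ℕ), (∀ i, e i < p) → ∀ (s : Finset ℕ),
      ∏ i ∈ s, B (e i * p ^ i) = B (∑ i ∈ s, e i * p ^ i) := by
    intro e he s
    induction s using Finset.induction_on_max with
    | empty => simpa using hone.symm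
    | insert a s ha ih =>
      have has : a ∉ s := fun h => lt_irrefl a (ha a h)
      rw [Finset.prod_insert has, Finset.sum_insert has, ih, hmul]
      have hT : ∑ i ∈ s, e i * p ^ i < p ^ a := sum_lt_pow hp2 a s e he ha
      have hc : (((e a * p ^ a + ∑ i ∈ s, e i * p ^ i).choose (e a * p ^ a) : ℕ) : k) = 1 := by
        have := lucasB a (e a) (∑ i ∈ s, e i * p ^ i) hT
        rw [CharP.natCast_eq_natCast' k p this, Nat.cast_one]
      rw [hc, one_smul]
  -- value of ψ on monomials
  set U : (ℕ →₀ ℕ) → k := fun e => ((∏ i ∈ e.support, (e i).factorial : ℕ) : k) with hU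
  have hmono : ∀ (e : ℕ →₀ ℕ), (∀ i, e i < p) →
      ψ (mka (MvPolynomial.monomial e 1)) = U e • B (valP p e) := by
    intro e he
    rw [← MvPolynomial.prod_X_pow_eq_monomial]
    simp only [map_prod, map_pow]
    calc ∏ i ∈ e.support, ψ (mka (MvPolynomial.X i)) ^ e i
        = ∏ i ∈ e.support, ((e i).factorial : k) • B (e i * p ^ i) := by
          refine Finset.prod_congr rfl fun i _ => ?_
          rw [hX i, hpow]
      _ = U e • B (valP p e) := by
          rw [prod_smul_aux, hprodS e he]
          simp only [hU, Nat.cast_prod, valP_def]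
  -- the U e are units
  have hUunit : ∀ (e : ℕ →₀ ℕ), (∀ i, e i < p) → IsUnit (U e) := by
    intro e he
    have hnd : ¬ p ∣ ∏ i ∈ e.support, (e i).factorial := by
      rw [← hp.coprime_iff_not_dvd]
      exact Nat.Coprime.prod_right fun i _ => hp.coprime_iff_not_dvd.mpr (by
        rw [hp.dvd_factorial]
        exact not_le.mpr (he i))
    have h1 : IsUnit ((∏ i ∈ e.support, (e i).factorial : ℕ) : ZMod p) := by
      rw [isUnit_iff_ne_zero, Ne, ZMod.natCast_eq_zero_iff]
      exact hnd
    have h2 := h1.map (ZMod.castHom (dvd_refl p) k)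
    simpa [hU] using h2
  -- digits of a natural number
  have hdig := fun n => valP_surj p hp2 n
  choose dig hdig1 hdig2 using hdig
  -- the inverse linear map
  set σ : D →ₗ[k] (MvPolynomial ℕ k ⧸ J) :=
    B.constr k fun n => Ring.inverse (U (dig n)) • mka (MvPolynomial.monomial (dig n) 1) with hσ
  have hσB : ∀ n : ℕ, σ (B n) =
      Ring.inverse (U (dig n)) • mka (MvPolynomial.monomial (dig n) 1) := fun n => by
    rw [hσ, Module.Basis.constr_basis]
  have hψσ : ∀ d : D, ψ (σ d) = d := by
    have hb : ∀ n : ℕ, ψ (σ (B n)) = B n := by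
      intro n
      rw [hσB, map_smul, hmono (dig n) (hdig1 n), hdig2 n, smul_smul,
        Ring.inverse_mul_cancel _ (hUunit (dig n) (hdig1 n)), one_smul]
    intro d
    have : (ψ.toLinearMap ∘ₗ σ) = LinearMap.id := B.ext fun n => by simpa using hb n
    simpa using congrArg (fun L : D →ₗ[k] D => L d) this
  have hkey : ∀ r : MvPolynomial ℕ k, σ (ψ (mka r)) = mka r := by
    intro r
    induction r using MvPolynomial.induction_on' with
    | add q r hq hr => simp only [map_add, hq, hr]
    | monomial e c =>
      by_cases hred : ∀ i, e i < p
      · have h1 : (MvPolynomial.monomial e c : MvPolynomial ℕ k)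
            = c • MvPolynomial.monomial e 1 := by
          rw [MvPolynomial.smul_monomial, smul_eq_mul, mul_one]
        rw [h1, map_smul, map_smul, map_smul]
        congr 1
        rw [hmono e hred, map_smul, hσB]
        have hde : dig (valP p e) = e :=
          valP_inj p hp2 (valP p e) _ _ (hdig1 _) hred (hdig2 _) rfl
        rw [hde, smul_smul, Ring.mul_inverse_cancel _ (hUunit e hred), one_smul]
      · push_neg at hred
        obtain ⟨i, hi⟩ := hred
        have hle : Finsupp.single i p ≤ e := Finsupp.single_le_iff.mpr hi
        have hmem : (MvPolynomial.monomial e c : MvPolynomial ℕ k) ∈ J := by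
          have hXp : (MvPolynomial.X i : MvPolynomial ℕ k) ^ p ∈ J :=
            hJ ▸ Ideal.subset_span ⟨i, rfl⟩
          have h2 : (MvPolynomial.monomial e c : MvPolynomial ℕ k)
              = MvPolynomial.X i ^ p * MvPolynomial.monomial (e - Finsupp.single i p) c := by
            rw [MvPolynomial.X_pow_eq_monomial, MvPolynomial.monomial_mul, one_mul]
            congr 1
            rw [add_tsub_cancel_of_le hle]
          rw [h2]
          exact Ideal.mul_mem_right _ _ hXp
        have hz : mka (MvPolynomial.monomial e c) = 0 := by
          rw [hmka, Ideal.Quotient.mkₐ_eq_mk]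
          exact Ideal.Quotient.eq_zero_iff_mem.mpr hmem
        rw [hz]
        simp
  constructor
  · intro a b hab
    obtain ⟨ra, rfl⟩ := Ideal.Quotient.mkₐ_surjective k J a
    obtain ⟨rb, rfl⟩ := Ideal.Quotient.mkₐ_surjective k J b
    rw [← hkey ra, ← hkey rb, hab]
  · intro d
    exact ⟨σ d, hψσ d⟩
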